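/- Let G be a finite directed acyclic graph with a distinguished vertex t and nonnegative integer weights w_e^i for each edge e and each 1 ≤ i ≤ k. Let u ≠ t be a vertex with outdegree d ≥ 1 and out-edges e_1 = (u, a_1), …, e_d = (u, a_d), and let v_{d+1}, …, v_k be vertices from none of which u is reachable by a directed path. Then F(u, …, u, v_{d+1}, …, v_k) (with u repeated d times) equals the maximum over all permutations π of {1, …, d} of [ Σ_{j=1}^d w_{e_{π(j)}}^j + F(a_{π(1)}, …, a_{π(d)}, v_{d+1}, …, v_k) ]. -/

import Mathlib

/-! Common setup: finite directed graphs as finsets of ordered pairs of vertices. -/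

/-- The list of edges of a path given as a list of vertices. -/
def pathEdges {V : Type} (p : List V) : List (V × V) := p.zip p.tail

/-- `p` is a directed path in the graph with edge set `E`: a nonempty sequence of
pairwise-distinct vertices in which consecutive vertices are joined by edges of `E`. -/
def IsPath {V : Type} [DecidableEq V] (E : Finset (V × V)) (p : List V) : Prop :=
  p ≠ [] ∧ p.Nodup ∧ p.Chain' (fun u v => (u, v) ∈ E)

/-- `p` is a directed path in `E` from `a` to `b`. -/
def IsPathFrom {V : Type} [DecidableEq V] (E : Finset (V × V)) (p : List V) (a b : V) : Prop :=
  IsPath E p ∧ p.head? = some a ∧ p.getLast? = some b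

/-- The indegree of vertex `v`. -/
def indeg {V : Type} [DecidableEq V] (E : Finset (V × V)) (v : V) : ℕ :=
  (E.filter (fun e => e.2 = v)).card

/-- The outdegree of vertex `v`. -/
def outdeg {V : Type} [DecidableEq V] (E : Finset (V × V)) (v : V) : ℕ :=
  (E.filter (fun e => e.1 = v)).card

/-- A directed cycle: a sequence `v₀, v₁, …, v_ℓ = v₀` with `ℓ ≥ 1` and all
`(v_j, v_{j+1})` edges. -/
def IsCycle {V : Type} [DecidableEq V] (E : Finset (V × V)) (p : List V) : Prop :=
  2 ≤ p.length ∧ p.Chain' (fun u v => (u, v) ∈ E) ∧ p.head? = p.getLast?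

/-- The graph is acyclic: it contains no directed cycle. -/
def Acyclic {V : Type} [DecidableEq V] (E : Finset (V × V)) : Prop :=
  ∀ p : List V, ¬ IsCycle E p

/-- The ant-conservation condition for a directed graph with edge set `E`, with `k`
distinguished sources `s 1, …, s k` (exactly the vertices of indegree 0) and `k`
distinguished destinations `t 1, …, t k` (exactly the vertices of outdegree 0):
`Σᵢ outdeg (s i) = Σᵢ indeg (t i) = k`, and `indeg v = outdeg v` for every
intermediate vertex `v`. -/
structure AntConservation {V : Type} [DecidableEq V]
    (E : Finset (V × V)) (k : ℕ) (s t : Fin k → V) : Prop where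
  s_inj : Function.Injective s
  t_inj : Function.Injective t
  sources : ∀ v, indeg E v = 0 ↔ ∃ i, s i = v
  dests : ∀ v, outdeg E v = 0 ↔ ∃ i, t i = v
  out_sum : ∑ i, outdeg E (s i) = k
  in_sum : ∑ i, indeg E (t i) = k
  conserve : ∀ v, (¬ ∃ i, s i = v) → (¬ ∃ i, t i = v) → indeg E v = outdeg E v

/-- The paths `P 1, …, P k` are pairwise edge-disjoint. -/
def EdgeDisjoint {V : Type} {k : ℕ} (P : Fin k → List V) : Prop :=
  ∀ i j, i ≠ j → ∀ e, e ∈ pathEdges (P i) → e ∉ pathEdges (P j)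

/-- The total weight of the edges of a path under an edge-weight function. -/
def listWeight {V : Type} (wt : V × V → ℕ) (p : List V) : ℕ :=
  ((pathEdges p).map wt).sum

/-- `FVal E w t v` is the supremum, in `ℕ ∪ {−∞}`, of the weights
`Σᵢ Σ_{e ∈ Pᵢ} w i e` over all feasible families for the tuple `v`, i.e. families
`P₁, …, P_k` of pairwise edge-disjoint directed paths with `Pᵢ` from `v i` to `t`;
it is `⊥ = −∞` if no feasible family exists. -/
noncomputable def FVal {V : Type} [DecidableEq V] {k : ℕ} (E : Finset (V × V))
    (w : Fin k → V × V → ℕ) (t : V) (v : Fin k → V) : WithBot ℕ :=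
  sSup {c : WithBot ℕ | ∃ P : Fin k → List V,
    (∀ i, IsPathFrom E (P i) (v i) t) ∧
    EdgeDisjoint P ∧
    c = (∑ i, listWeight (w i) (P i) : ℕ)}

/-! ### Auxiliary lemmas -/

lemma pathEdges_cons {V : Type} (u h : V) (p : List V) (hp : p.head? = some h) :
    pathEdges (u :: p) = (u, h) :: pathEdges p := by
  cases p with
  | nil => simp at hp
  | cons x xs => simp_all [pathEdges]

lemma mem_pathEdges_fst {V : Type} {p : List V} {e : V × V} (he : e ∈ pathEdges p) :
    e.1 ∈ p := (List.of_mem_zip he).1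

lemma mem_pathEdges_chain' {V : Type} {R : V → V → Prop} {p : List V} (hc : p.Chain' R)
    {e : V × V} (he : e ∈ pathEdges p) : R e.1 e.2 := by
  induction p with
  | nil => simp [pathEdges] at he
  | cons x xs ih =>
    cases xs with
    | nil => simp [pathEdges] at he
    | cons y ys =>
      rw [pathEdges_cons x y (y :: ys) rfl] at he
      rcases List.mem_cons.mp he with h | h
      · subst h; exact (List.isChain_cons_cons.mp hc).1
      · exact ih (List.isChain_cons_cons.mp hc).2 h

lemma pathEdges_nodup {V : Type} {p : List V} (hp : p.Nodup) : (pathEdges p).Nodup := by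
  induction p with
  | nil => simp [pathEdges]
  | cons x xs ih =>
    cases xs with
    | nil => simp [pathEdges]
    | cons y ys =>
      rw [pathEdges_cons x y (y :: ys) rfl]
      refine List.nodup_cons.mpr ⟨fun h => ?_, ih (List.nodup_cons.mp hp).2⟩
      exact (List.nodup_cons.mp hp).1 (mem_pathEdges_fst h)

lemma listWeight_le_sum {V : Type} [DecidableEq V] {E : Finset (V × V)} {p : List V}
    (hnd : p.Nodup) (hc : p.Chain' (fun u v => (u, v) ∈ E)) (wt : V × V → ℕ) :
    listWeight wt p ≤ ∑ e ∈ E, wt e := by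
  have h1 : listWeight wt p = ∑ e ∈ (pathEdges p).toFinset, wt e := by
    rw [listWeight, ← List.sum_toFinset _ (pathEdges_nodup hnd)]
  rw [h1]
  apply Finset.sum_le_sum_of_subset
  intro e he
  exact mem_pathEdges_chain' hc (List.mem_toFinset.mp he)

lemma csSup_mem_withbot {S : Set (WithBot ℕ)} (hne : S.Nonempty) (hbot : ⊥ ∉ S)
    (hbdd : BddAbove S) : sSup S ∈ S := by
  obtain ⟨x, hx⟩ := hne
  obtain ⟨n, rfl⟩ : ∃ n : ℕ, x = (n : WithBot ℕ) := by
    cases x with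
    | bot => exact absurd hx hbot
    | coe n => exact ⟨n, rfl⟩
  have hns : ¬ S ⊆ {⊥} := fun h => by simpa using h hx
  rw [WithBot.sSup_eq hns hbdd]
  obtain ⟨M, hM⟩ := hbdd
  obtain ⟨m, rfl⟩ : ∃ m : ℕ, M = (m : WithBot ℕ) := by
    cases M with
    | bot => exact absurd (hM hx) (by simp)
    | coe m => exact ⟨m, rfl⟩
  have hpre : BddAbove ((fun n : ℕ => (n : WithBot ℕ)) ⁻¹' S) := by
    refine ⟨m, fun y hy => ?_⟩
    have := hM hy
    simpa using this
  exact Nat.sSup_mem ⟨n, hx⟩ hpre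

lemma prefix_path {V : Type} [DecidableEq V] {E : Finset (V × V)} {p : List V} {a b x : V}
    (hp : IsPathFrom E p a b) (hx : x ∈ p) : ∃ q, IsPathFrom E q a x := by
  obtain ⟨s, r, rfl⟩ := List.append_of_mem hx
  refine ⟨s ++ [x], ⟨⟨by simp, ?_, ?_⟩, ?_, List.getLast?_concat⟩⟩
  · exact hp.1.2.1.sublist ((List.cons_sublist_cons.mpr (List.nil_sublist r)).append_left s)
  · exact hp.1.2.2.prefix ⟨r, by simp⟩
  · rw [← hp.2.1]; cases s <;> simp

lemma no_path_through {V : Type} [DecidableEq V] {E : Finset (V × V)} (hacyc : Acyclic E)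
    {p : List V} {u c b : V} (he : (u, c) ∈ E) (hp : IsPathFrom E p c b) (hu : u ∈ p) :
    False := by
  obtain ⟨q, hq⟩ := prefix_path hp hu
  apply hacyc (u :: q)
  have hqne : q ≠ [] := hq.1.1
  refine ⟨?_, ?_, ?_⟩
  · cases q with
    | nil => exact absurd rfl hqne
    | cons z zs => simp
  · refine List.isChain_cons.mpr ⟨fun y hy => ?_, hq.1.2.2⟩
    rw [hq.2.1] at hy
    simp at hy; subst hy; exact he
  · cases q with
    | nil => exact absurd rfl hqne
    | cons z zs => rw [List.head?_cons, List.getLast?_cons_cons, hq.2.2]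

lemma out_edges_eq {V : Type} [DecidableEq V] {E : Finset (V × V)} {u : V} {d : ℕ}
    {a : Fin d → V} (ha : Function.Injective a) (haE : ∀ j, (u, a j) ∈ E)
    (hdeg : outdeg E u = d) {x : V} (hx : (u, x) ∈ E) : ∃ j, a j = x := by
  have hinj : Function.Injective (fun j : Fin d => ((u, a j) : V × V)) := by
    intro i j h
    exact ha (congrArg Prod.snd h)
  have hsub : Finset.image (fun j : Fin d => ((u, a j) : V × V)) Finset.univ ⊆
      E.filter (fun e => e.1 = u) := by
    intro e he
    simp only [Finset.mem_image] at he
    obtain ⟨j, _, rfl⟩ := he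
    simp [haE j]
  have heq : Finset.image (fun j : Fin d => ((u, a j) : V × V)) Finset.univ =
      E.filter (fun e => e.1 = u) := by
    apply Finset.eq_of_subset_of_card_le hsub
    rw [Finset.card_image_of_injective _ hinj]
    simp [← hdeg, outdeg]
  have : (u, x) ∈ Finset.image (fun j : Fin d => ((u, a j) : V × V)) Finset.univ := by
    rw [heq]; simp [hx]
  simp only [Finset.mem_image] at this
  obtain ⟨j, _, hj⟩ := this
  exact ⟨j, congrArg Prod.snd hj⟩

section
variable {V : Type} {k d : ℕ} (hdk : d ≤ k)

lemma idx_append_left (f : Fin d → V) (g : Fin (k - d) → V) (i : Fin d) :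
    (Fin.append f g ∘ Fin.cast (Nat.add_sub_cancel' hdk).symm) (Fin.castLE hdk i) = f i := by
  have : Fin.cast (Nat.add_sub_cancel' hdk).symm (Fin.castLE hdk i) = Fin.castAdd (k - d) i := by
    apply Fin.ext; simp
  simp only [Function.comp_apply, this, Fin.append_left]

lemma idx_append_right (f : Fin d → V) (g : Fin (k - d) → V) (j : Fin (k - d)) :
    (Fin.append f g ∘ Fin.cast (Nat.add_sub_cancel' hdk).symm)
      (Fin.cast (Nat.add_sub_cancel' hdk) (Fin.natAdd d j)) = g j := by
  have : Fin.cast (Nat.add_sub_cancel' hdk).symm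
      (Fin.cast (Nat.add_sub_cancel' hdk) (Fin.natAdd d j)) = Fin.natAdd d j := by
    apply Fin.ext; simp
  simp only [Function.comp_apply, this, Fin.append_right]

lemma idx_sum_split {M : Type*} [AddCommMonoid M] (g : Fin k → M) :
    ∑ i, g i = ∑ i : Fin d, g (Fin.castLE hdk i) +
      ∑ j : Fin (k - d), g (Fin.cast (Nat.add_sub_cancel' hdk) (Fin.natAdd d j)) := by
  have h := (Fin.sum_univ_add (fun i : Fin (d + (k - d)) =>
    g (Fin.cast (Nat.add_sub_cancel' hdk) i)))
  have h0 : ∑ i, g i = ∑ i : Fin (d + (k - d)), g (Fin.cast (Nat.add_sub_cancel' hdk) i) := by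
    refine Fintype.sum_equiv (finCongr (Nat.add_sub_cancel' hdk).symm) _ _ fun i => rfl
  rw [h0, h]
  rfl

lemma idx_cases (i : Fin k) :
    (∃ (i₀ : Fin d), i = Fin.castLE hdk i₀) ∨
    (∃ (j : Fin (k - d)), i = Fin.cast (Nat.add_sub_cancel' hdk) (Fin.natAdd d j)) := by
  by_cases hi : (i : ℕ) < d
  · exact Or.inl ⟨⟨i, hi⟩, by apply Fin.ext; simp⟩
  · refine Or.inr ⟨⟨(i : ℕ) - d, ?_⟩, ?_⟩
    · omega
    · apply Fin.ext; simp; omega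

end

section
variable {V : Type} [DecidableEq V] {k : ℕ} (E : Finset (V × V))
  (w : Fin k → V × V → ℕ) (t : V) (v : Fin k → V)

/-- The set of weights of feasible families. -/
def FSet : Set (WithBot ℕ) := {c : WithBot ℕ | ∃ P : Fin k → List V,
    (∀ i, IsPathFrom E (P i) (v i) t) ∧
    EdgeDisjoint P ∧
    c = (∑ i, listWeight (w i) (P i) : ℕ)}

lemma FVal_eq : FVal E w t v = sSup (FSet E w t v) := rfl

lemma FSet_le {c : WithBot ℕ} (hc : c ∈ FSet E w t v) :
    c ≤ ((∑ i, ∑ e ∈ E, w i e : ℕ) : WithBot ℕ) := by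
  obtain ⟨P, hP, _, rfl⟩ := hc
  have : (∑ i, listWeight (w i) (P i)) ≤ ∑ i, ∑ e ∈ E, w i e :=
    Finset.sum_le_sum fun i _ => listWeight_le_sum (hP i).1.2.1 (hP i).1.2.2 (w i)
  exact_mod_cast this

lemma FSet_bddAbove : BddAbove (FSet E w t v) :=
  ⟨_, fun _ hc => FSet_le E w t v hc⟩

lemma FSet_not_bot : ⊥ ∉ FSet E w t v := by
  rintro ⟨P, _, _, h⟩
  exact (WithBot.coe_ne_bot h.symm)

lemma FSet_csSup_mem (hne : (FSet E w t v).Nonempty) : sSup (FSet E w t v) ∈ FSet E w t v :=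
  csSup_mem_withbot hne (FSet_not_bot E w t v) (FSet_bddAbove E w t v)

end

lemma path_decomp {V : Type} [DecidableEq V] {E : Finset (V × V)} {p : List V} {u t : V}
    (hut : u ≠ t) (hp : IsPathFrom E p u t) :
    ∃ (h : V) (rest : List V), p = u :: rest ∧ rest.head? = some h ∧ (u, h) ∈ E ∧
      IsPathFrom E rest h t := by
  obtain ⟨⟨hne, hnd, hch⟩, hhd, hlst⟩ := hp
  cases p with
  | nil => exact absurd rfl hne
  | cons x xs =>
    have hx : x = u := by simpa using hhd
    subst hx
    cases xs with
    | nil => exact absurd (by simpa using hlst) hut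
    | cons y ys =>
      refine ⟨y, y :: ys, rfl, rfl, (List.isChain_cons_cons.mp hch).1, ⟨⟨by simp,
        (List.nodup_cons.mp hnd).2, (List.isChain_cons_cons.mp hch).2⟩, rfl, ?_⟩⟩
      rw [← hlst, List.getLast?_cons_cons]

lemma getLast?_cons_ne_nil {α : Type*} (x : α) {l : List α} (h : l ≠ []) :
    (x :: l).getLast? = l.getLast? := by
  cases l with
  | nil => exact absurd rfl h
  | cons z zs => rw [List.getLast?_cons_cons]

lemma tail_edges_subset {V : Type} {p : List V} {e : V × V} (he : e ∈ pathEdges p.tail) :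
    e ∈ pathEdges p := by
  cases p with
  | nil => simpa [pathEdges] using he
  | cons x xs =>
    cases xs with
    | nil => simpa [pathEdges] using he
    | cons y ys =>
      rw [pathEdges_cons x y (y :: ys) rfl]
      exact List.mem_cons_of_mem _ he

/-- Let `G` be a finite DAG with a distinguished vertex `t` and
nonnegative integer weights `w i e` for `1 ≤ i ≤ k`. Let `u ≠ t` be a vertex of
outdegree `d ≥ 1` with out-edges `(u, a 1), …, (u, a d)`, and let
`vtail = (v_{d+1}, …, v_k)` be vertices from none of which `u` is reachable by a
directed path. Then `F(u, …, u, v_{d+1}, …, v_k)` (with `u` repeated `d` times) equals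
the maximum over all permutations `π` of `{1, …, d}` of
`Σ_{j=1}^d w^j_{(u, a (π j))} + F(a (π 1), …, a (π d), v_{d+1}, …, v_k)`. -/
theorem stmt15 {V : Type} [Fintype V] [DecidableEq V] (E : Finset (V × V)) (k : ℕ)
    (hacyc : Acyclic E) (t : V) (w : Fin k → V × V → ℕ)
    (u : V) (hut : u ≠ t) (d : ℕ) (hd1 : 1 ≤ d) (hdk : d ≤ k)
    (hdeg : outdeg E u = d)
    (a : Fin d → V) (ha : Function.Injective a) (haE : ∀ j, (u, a j) ∈ E)
    (vtail : Fin (k - d) → V)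
    (hreach : ∀ j, ¬ ∃ p : List V, IsPathFrom E p (vtail j) u) :
    FVal E w t (Fin.append (fun _ : Fin d => u) vtail ∘
        Fin.cast (Nat.add_sub_cancel' hdk).symm) =
      (Finset.univ : Finset (Equiv.Perm (Fin d))).sup (fun π =>
        ((∑ j : Fin d, w (Fin.castLE hdk j) (u, a (π j)) : ℕ) : WithBot ℕ) +
        FVal E w t (Fin.append (fun j : Fin d => a (π j)) vtail ∘
          Fin.cast (Nat.add_sub_cancel' hdk).symm)) := by
  set vL : Fin k → V := Fin.append (fun _ : Fin d => u) vtail ∘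
        Fin.cast (Nat.add_sub_cancel' hdk).symm with hvL
  set vR : Equiv.Perm (Fin d) → Fin k → V := fun π => Fin.append (fun j : Fin d => a (π j))
        vtail ∘ Fin.cast (Nat.add_sub_cancel' hdk).symm with hvR
  have hvLH : ∀ i₀ : Fin d, vL (Fin.castLE hdk i₀) = u :=
    fun i₀ => idx_append_left hdk _ _ i₀
  have hvLT : ∀ j, vL (Fin.cast (Nat.add_sub_cancel' hdk) (Fin.natAdd d j)) = vtail j :=
    fun j => idx_append_right hdk _ _ j
  have hvRH : ∀ π (i₀ : Fin d), vR π (Fin.castLE hdk i₀) = a (π i₀) :=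
    fun π i₀ => idx_append_left hdk _ _ i₀
  have hvRT : ∀ π j, vR π (Fin.cast (Nat.add_sub_cancel' hdk) (Fin.natAdd d j)) = vtail j :=
    fun π j => idx_append_right hdk _ _ j
  have hcastLE_inj : Function.Injective (Fin.castLE hdk) := fun i j h => by
    apply Fin.ext
    exact congrArg (Fin.val : Fin k → ℕ) h
  have hHT_ne : ∀ (i₀ : Fin d) (j : Fin (k - d)),
      Fin.castLE hdk i₀ ≠ Fin.cast (Nat.add_sub_cancel' hdk) (Fin.natAdd d j) := by
    intro i₀ j h
    have := congrArg Fin.val h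
    simp at this
    omega
  apply le_antisymm
  · -- LHS ≤ RHS
    rw [FVal_eq]
    rcases Set.eq_empty_or_nonempty (FSet E w t vL) with hS | hS
    · rw [hS, WithBot.sSup_empty]; exact bot_le
    refine csSup_le hS fun c hc => ?_
    obtain ⟨P, hP, hdisj, rfl⟩ := hc
    -- decompose the first d paths
    have hdec : ∀ i₀ : Fin d, ∃ (j : Fin d) (rest : List V),
        P (Fin.castLE hdk i₀) = u :: rest ∧ rest.head? = some (a j) ∧
        IsPathFrom E rest (a j) t := by
      intro i₀
      have hp := hP (Fin.castLE hdk i₀)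
      rw [hvLH i₀] at hp
      obtain ⟨h, rest, h1, h2, h3, h4⟩ := path_decomp hut hp
      obtain ⟨j, rfl⟩ := out_edges_eq ha haE hdeg h3
      exact ⟨j, rest, h1, h2, h4⟩
    choose f rest hPeq hrh hrp using hdec
    have hfinj : Function.Injective f := by
      intro i i' hii'
      by_contra hne
      have h1 : ((u, a (f i)) : V × V) ∈ pathEdges (P (Fin.castLE hdk i)) := by
        rw [hPeq i, pathEdges_cons u (a (f i)) _ (hrh i)]
        exact List.mem_cons_self
      have h2 : ((u, a (f i')) : V × V) ∈ pathEdges (P (Fin.castLE hdk i')) := by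
        rw [hPeq i', pathEdges_cons u (a (f i')) _ (hrh i')]
        exact List.mem_cons_self
      rw [hii'] at h1
      exact hdisj _ _ (fun h => hne (hcastLE_inj h)) _ h1 h2
    let π : Equiv.Perm (Fin d) :=
      Equiv.ofBijective f ((Fintype.bijective_iff_injective_and_card f).mpr ⟨hfinj, rfl⟩)
    have hπ : ∀ i₀, π i₀ = f i₀ := fun i₀ => rfl
    set Q : Fin k → List V := fun i => if (i : ℕ) < d then (P i).tail else P i with hQ
    have hQH : ∀ i₀ : Fin d, Q (Fin.castLE hdk i₀) = rest i₀ := by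
      intro i₀
      have : ((Fin.castLE hdk i₀ : Fin k) : ℕ) < d := by simp [i₀.isLt]
      simp only [hQ, if_pos this, hPeq i₀, List.tail_cons]
    have hQT : ∀ j, Q (Fin.cast (Nat.add_sub_cancel' hdk) (Fin.natAdd d j)) =
        P (Fin.cast (Nat.add_sub_cancel' hdk) (Fin.natAdd d j)) := by
      intro j
      have : ¬ ((Fin.cast (Nat.add_sub_cancel' hdk) (Fin.natAdd d j) : Fin k) : ℕ) < d := by
        simp
      simp only [hQ, if_neg this]
    have hQpath : ∀ i, IsPathFrom E (Q i) (vR π i) t := by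
      intro i
      rcases idx_cases hdk i with ⟨i₀, rfl⟩ | ⟨j, rfl⟩
      · rw [hQH i₀, hvRH π i₀, hπ i₀]
        exact hrp i₀
      · rw [hQT j, hvRT π j]
        have := hP (Fin.cast (Nat.add_sub_cancel' hdk) (Fin.natAdd d j))
        rwa [hvLT j] at this
    have hQsub : ∀ i e, e ∈ pathEdges (Q i) → e ∈ pathEdges (P i) := by
      intro i e he
      by_cases hi : (i : ℕ) < d
      · rw [hQ] at he; simp only [if_pos hi] at he
        exact tail_edges_subset he
      · rw [hQ] at he; simp only [if_neg hi] at he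
        exact he
    have hQdisj : EdgeDisjoint Q := by
      intro i j hij e hei hej
      exact hdisj i j hij e (hQsub i e hei) (hQsub j e hej)
    have hmem : ((∑ i, listWeight (w i) (Q i) : ℕ) : WithBot ℕ) ∈ FSet E w t (vR π) :=
      ⟨Q, hQpath, hQdisj, rfl⟩
    have hsum : ∑ i, listWeight (w i) (P i) =
        (∑ i₀ : Fin d, w (Fin.castLE hdk i₀) (u, a (π i₀))) +
          ∑ i, listWeight (w i) (Q i) := by
      rw [idx_sum_split hdk (fun i => listWeight (w i) (P i)),
          idx_sum_split hdk (fun i => listWeight (w i) (Q i))]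
      have h1 : ∀ i₀ : Fin d, listWeight (w (Fin.castLE hdk i₀)) (P (Fin.castLE hdk i₀)) =
          w (Fin.castLE hdk i₀) (u, a (π i₀)) +
            listWeight (w (Fin.castLE hdk i₀)) (Q (Fin.castLE hdk i₀)) := by
        intro i₀
        rw [hQH i₀, hPeq i₀, hπ i₀, listWeight,
          pathEdges_cons u (a (f i₀)) _ (hrh i₀)]
        simp [listWeight]
      rw [Finset.sum_congr rfl (fun i₀ _ => h1 i₀), Finset.sum_add_distrib,
        Finset.sum_congr rfl (fun j (_ : j ∈ Finset.univ) => congrArg _ (hQT j).symm)]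
      ring
    rw [hsum, Nat.cast_add]
    calc ((∑ i₀ : Fin d, w (Fin.castLE hdk i₀) (u, a (π i₀)) : ℕ) : WithBot ℕ) +
          ((∑ i, listWeight (w i) (Q i) : ℕ) : WithBot ℕ)
        ≤ ((∑ i₀ : Fin d, w (Fin.castLE hdk i₀) (u, a (π i₀)) : ℕ) : WithBot ℕ) +
            FVal E w t (vR π) := by
          exact add_le_add le_rfl (le_csSup (FSet_bddAbove E w t (vR π)) hmem)
      _ ≤ _ := Finset.le_sup (f := fun π : Equiv.Perm (Fin d) =>
            ((∑ j : Fin d, w (Fin.castLE hdk j) (u, a (π j)) : ℕ) : WithBot ℕ) +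
              FVal E w t (vR π)) (Finset.mem_univ π)
  · -- RHS ≤ LHS
    refine Finset.sup_le fun π _ => ?_
    rcases Set.eq_empty_or_nonempty (FSet E w t (vR π)) with hS | hS
    · rw [FVal_eq, hS, WithBot.sSup_empty, WithBot.add_bot]
      exact bot_le
    have hmem := FSet_csSup_mem E w t (vR π) hS
    rw [FVal_eq E w t (vR π)]
    obtain ⟨Q, hQ, hQdisj, hceq⟩ := hmem
    rw [hceq]
    -- u is not on any of the paths Q i
    have hQu : ∀ i, u ∉ Q i := by
      intro i hu
      rcases idx_cases hdk i with ⟨i₀, rfl⟩ | ⟨j, rfl⟩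
      · have hp := hQ (Fin.castLE hdk i₀)
        rw [hvRH π i₀] at hp
        exact no_path_through hacyc (haE (π i₀)) hp hu
      · have hp := hQ (Fin.cast (Nat.add_sub_cancel' hdk) (Fin.natAdd d j))
        rw [hvRT π j] at hp
        exact hreach j (prefix_path hp hu)
    set P : Fin k → List V := fun i => if (i : ℕ) < d then u :: Q i else Q i with hP
    have hPH : ∀ i₀ : Fin d, P (Fin.castLE hdk i₀) = u :: Q (Fin.castLE hdk i₀) := by
      intro i₀
      have : ((Fin.castLE hdk i₀ : Fin k) : ℕ) < d := by simp [i₀.isLt]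
      simp only [hP, if_pos this]
    have hPT : ∀ j, P (Fin.cast (Nat.add_sub_cancel' hdk) (Fin.natAdd d j)) =
        Q (Fin.cast (Nat.add_sub_cancel' hdk) (Fin.natAdd d j)) := by
      intro j
      have : ¬ ((Fin.cast (Nat.add_sub_cancel' hdk) (Fin.natAdd d j) : Fin k) : ℕ) < d := by
        simp
      simp only [hP, if_neg this]
    have hQhead : ∀ i₀ : Fin d, (Q (Fin.castLE hdk i₀)).head? = some (a (π i₀)) := by
      intro i₀
      have := (hQ (Fin.castLE hdk i₀)).2.1
      rwa [hvRH π i₀] at this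
    have hPedgesH : ∀ i₀ : Fin d, pathEdges (P (Fin.castLE hdk i₀)) =
        (u, a (π i₀)) :: pathEdges (Q (Fin.castLE hdk i₀)) := by
      intro i₀
      rw [hPH i₀, pathEdges_cons u (a (π i₀)) _ (hQhead i₀)]
    have hPpath : ∀ i, IsPathFrom E (P i) (vL i) t := by
      intro i
      rcases idx_cases hdk i with ⟨i₀, rfl⟩ | ⟨j, rfl⟩
      · rw [hPH i₀, hvLH i₀]
        have hq := hQ (Fin.castLE hdk i₀)
        rw [hvRH π i₀] at hq
        obtain ⟨⟨hne, hnd, hch⟩, hhd, hlst⟩ := hq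
        refine ⟨⟨by simp, List.nodup_cons.mpr ⟨hQu _, hnd⟩, ?_⟩, List.head?_cons, ?_⟩
        · refine List.isChain_cons.mpr ⟨fun y hy => ?_, hch⟩
          rw [hhd] at hy
          simp at hy; subst hy; exact haE (π i₀)
        · rw [getLast?_cons_ne_nil u hne]
          exact hlst
      · rw [hPT j, hvLT j]
        have := hQ (Fin.cast (Nat.add_sub_cancel' hdk) (Fin.natAdd d j))
        rwa [hvRT π j] at this
    have hPedges : ∀ i e, e ∈ pathEdges (P i) →
        e ∈ pathEdges (Q i) ∨ ∃ i₀ : Fin d, i = Fin.castLE hdk i₀ ∧ e = (u, a (π i₀)) := by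
      intro i e he
      rcases idx_cases hdk i with ⟨i₀, rfl⟩ | ⟨j, rfl⟩
      · rw [hPedgesH i₀] at he
        rcases List.mem_cons.mp he with h | h
        · exact Or.inr ⟨i₀, rfl, h⟩
        · exact Or.inl h
      · rw [hPT j] at he
        exact Or.inl he
    have hPdisj : EdgeDisjoint P := by
      intro i j hij e hei hej
      rcases hPedges i e hei with h1 | ⟨i₀, rfl, rfl⟩
      · rcases hPedges j e hej with h2 | ⟨j₀, rfl, he⟩
        · exact hQdisj i j hij e h1 h2
        · exact hQu i (by rw [he] at h1; exact mem_pathEdges_fst h1)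
      · rcases hPedges j _ hej with h2 | ⟨j₀, rfl, he⟩
        · exact hQu j (mem_pathEdges_fst h2)
        · have : a (π i₀) = a (π j₀) := congrArg Prod.snd he
          have : i₀ = j₀ := π.injective (ha this)
          exact hij (by rw [this])
    have hsum : ∑ i, listWeight (w i) (P i) =
        (∑ i₀ : Fin d, w (Fin.castLE hdk i₀) (u, a (π i₀))) +
          ∑ i, listWeight (w i) (Q i) := by
      rw [idx_sum_split hdk (fun i => listWeight (w i) (P i)),
          idx_sum_split hdk (fun i => listWeight (w i) (Q i))]
      have h1 : ∀ i₀ : Fin d, listWeight (w (Fin.castLE hdk i₀)) (P (Fin.castLE hdk i₀)) =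
          w (Fin.castLE hdk i₀) (u, a (π i₀)) +
            listWeight (w (Fin.castLE hdk i₀)) (Q (Fin.castLE hdk i₀)) := by
        intro i₀
        rw [listWeight, hPedgesH i₀]
        simp [listWeight]
      rw [Finset.sum_congr rfl (fun i₀ _ => h1 i₀), Finset.sum_add_distrib,
        Finset.sum_congr rfl (fun j (_ : j ∈ Finset.univ) => congrArg _ (hPT j))]
      ring
    have hmemP : ((∑ i, listWeight (w i) (P i) : ℕ) : WithBot ℕ) ∈ FSet E w t vL :=
      ⟨P, hPpath, hPdisj, rfl⟩
    rw [FVal_eq E w t vL]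
    calc ((∑ j : Fin d, w (Fin.castLE hdk j) (u, a (π j)) : ℕ) : WithBot ℕ) +
          ((∑ i, listWeight (w i) (Q i) : ℕ) : WithBot ℕ)
        = ((∑ i, listWeight (w i) (P i) : ℕ) : WithBot ℕ) := by
          rw [hsum, Nat.cast_add]
      _ ≤ sSup (FSet E w t vL) := le_csSup (FSet_bddAbove E w t vL) hmemP
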